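/- Let G be a group such that the abelianization G/D is finitely generated, where D = ⁅G,G⁆. Let D̃ be the preimage in G of the torsion subgroup of G/D (i.e., the set of elements of G whose class in G/D has finite order). Then ⁅D,G⁆ has finite index in ⁅D̃,G⁆; equivalently, the quotient group ⁅D̃,G⁆/⁅D,G⁆ is finite. -/

import Mathlib

open Subgroup
open scoped commutatorElement
open scoped IsMulCommutative

/-- The torsion subgroup of a finitely generated commutative group is finite. -/
lemma finite_torsion_of_fg (A : Type*) [CommGroup A] [Group.FG A] :
    Finite (CommGroup.torsion A) := by
  haveI : Module.Finite ℤ (Additive A) :=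
    Module.Finite.iff_addGroup_fg.mpr inferInstance
  haveI : IsNoetherian ℤ (Additive A) :=
    isNoetherian_of_isNoetherianRing_of_finite ℤ (Additive A)
  have hfinT : Finite (Submodule.torsion ℤ (Additive A)) :=
    Module.finite_of_fg_torsion _ (Submodule.torsion_isTorsion (R:=ℤ) (M:=Additive A))
  refine Finite.of_injective
    (fun x : CommGroup.torsion A =>
      (⟨Additive.ofMul (x : A), ?_⟩ : Submodule.torsion ℤ (Additive A))) ?_
  · have : Additive.ofMul (x : A) ∈ (Submodule.torsion ℤ (Additive A)).toAddSubgroup := by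
      rw [Submodule.torsion_int]
      exact isOfFinAddOrder_ofMul_iff.mpr x.2
    exact this
  · intro x y h
    have h2 := congrArg Subtype.val h
    exact Subtype.ext (Additive.ofMul.injective h2)

section CommIdentities

variable {H : Type*} [Group H]

lemma comm_mul_right {s h : H} (hz : ⁅s, h⁆ ∈ center H) (g : H) :
    ⁅s, g * h⁆ = ⁅s, g⁆ * ⁅s, h⁆ := by
  have h1 : ⁅s, g * h⁆ = ⁅s, g⁆ * (g * ⁅s, h⁆ * g⁻¹) := by
    simp only [commutatorElement_def]; group
  rw [h1, mem_center_iff.mp hz g]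
  group

lemma comm_mul_left {b g : H} (hz : ⁅b, g⁆ ∈ center H) (a : H) :
    ⁅a * b, g⁆ = ⁅b, g⁆ * ⁅a, g⁆ := by
  have h1 : ⁅a * b, g⁆ = (a * ⁅b, g⁆ * a⁻¹) * ⁅a, g⁆ := by
    simp only [commutatorElement_def]; group
  rw [h1, mem_center_iff.mp hz a]
  group

lemma comm_pow_left (hc : commutator H ≤ center H) (s g : H) :
    ∀ n : ℕ, ⁅s ^ n, g⁆ = ⁅s, g⁆ ^ n := by
  intro n
  induction n with
  | zero => simp
  | succ n ih =>
    have hmem : ⁅s, g⁆ ∈ center H :=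
      hc (commutator_mem_commutator (mem_top s) (mem_top g))
    rw [pow_succ, comm_mul_left hmem (s ^ n), ih, pow_succ']

end CommIdentities

section Core

variable {H : Type*} [Group H]

/-- If the commutator subgroup of `H` is central, the abelianization of `H` is f.g.,
and `S` is a subgroup with finitely many cosets of (the trace of) the commutator
subgroup, then `⁅S, ⊤⁆` is finite. -/
lemma core_finite (hc : commutator H ≤ center H)
    (hfg : Group.FG (Abelianization H)) (S : Subgroup H)
    (hfin : Finite (S ⧸ (commutator H).subgroupOf S)) :
    Finite (⁅S, (⊤ : Subgroup H)⁆ : Subgroup H) := by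
  classical
  haveI := hfg
  haveI := hfin
  have ccen : ∀ s g : H, ⁅s, g⁆ ∈ center H := fun s g =>
    hc (commutator_mem_commutator (mem_top s) (mem_top g))
  -- the bihomomorphism `s g ↦ ⁅s, g⁆` into the center
  let φ : H → (H →* center H) := fun s =>
    { toFun := fun g => ⟨⁅s, g⁆, ccen s g⟩
      map_one' := Subtype.ext (by simp)
      map_mul' := fun g h => Subtype.ext (comm_mul_right (ccen s h) g) }
  let ψ : H → (Abelianization H →* center H) := fun s => Abelianization.lift (φ s)
  have hof : Function.Surjective (Abelianization.of (G := H)) :=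
    fun x => Quotient.inductionOn' x fun g => ⟨g, rfl⟩
  -- every element of `S` is torsion modulo the commutator subgroup
  have key : ∀ s : S, ∃ n : ℕ, 0 < n ∧ (s : H) ^ n ∈ commutator H := by
    intro s
    have main : ∀ a b : ℕ, a < b →
        (QuotientGroup.mk (s ^ a) : S ⧸ (commutator H).subgroupOf S) =
          QuotientGroup.mk (s ^ b) → ∃ n : ℕ, 0 < n ∧ (s : H) ^ n ∈ commutator H := by
      intro a b hab h
      refine ⟨b - a, Nat.sub_pos_of_lt hab, ?_⟩
      have h2 : (s ^ a)⁻¹ * s ^ b ∈ (commutator H).subgroupOf S := QuotientGroup.eq.mp h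
      have h3 : (s ^ a)⁻¹ * s ^ b = s ^ (b - a) := by
        have : s ^ a * s ^ (b - a) = s ^ b := by
          rw [← pow_add, Nat.add_sub_cancel' hab.le]
        rw [← this, inv_mul_cancel_left]
      rw [h3, mem_subgroupOf] at h2
      simpa using h2
    obtain ⟨m, n, hmn, h⟩ := Finite.exists_ne_map_eq_of_infinite
      (fun k : ℕ => (QuotientGroup.mk (s ^ k) : S ⧸ (commutator H).subgroupOf S))
    rcases hmn.lt_or_gt with hlt | hlt
    · exact main m n hlt h
    · exact main n m hlt h.symm
  -- the ranges of the homomorphisms `ψ s` for coset representatives `s`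
  let R : (S ⧸ (commutator H).subgroupOf S) → Subgroup (center H) := fun q =>
    (ψ ((q.out : S) : H)).range
  have hRfin : ∀ q : S ⧸ (commutator H).subgroupOf S, Finite (R q) := by
    intro q
    obtain ⟨n, hn, hmem⟩ := key q.out
    have htor : Monoid.IsTorsion (R q) := by
      intro x
      rw [isOfFinOrder_iff_pow_eq_one]
      refine ⟨n, hn, ?_⟩
      obtain ⟨a, ha⟩ := x.2
      obtain ⟨g, rfl⟩ := hof a
      have hcoe : ((x : center H) : H) = ⁅((q.out : S) : H), g⁆ := by
        rw [← ha]; rfl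
      have hone : ((x : center H) : H) ^ n = 1 := by
        rw [hcoe, ← comm_pow_left hc]
        exact commutatorElement_eq_one_iff_mul_comm.mpr
          (mem_center_iff.mp (hc hmem) g).symm
      apply Subtype.ext; apply Subtype.ext
      simpa using hone
    haveI : Group.FG (R q) := Group.fg_range _
    exact CommGroup.finite_of_fg_torsion _ htor
  -- the union of these finitely many finite ranges
  let U : Set (center H) := ⋃ q, ((R q : Set (center H)))
  have hU : U.Finite := Set.finite_iUnion fun q => by
    haveI := hRfin q; exact (R q : Set (center H)).toFinite
  haveI := hU.to_subtype
  let Z : Subgroup (center H) := Subgroup.closure U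
  haveI hZfg : Group.FG Z := Group.closure_finite_fg U
  have hZtor : Monoid.IsTorsion Z := by
    have hsub : U ⊆ (CommGroup.torsion (center H) : Set (center H)) := by
      intro x hx
      obtain ⟨q, hq⟩ := Set.mem_iUnion.mp (show x ∈ ⋃ q, ((R q : Set (center H))) from hx)
      haveI := hRfin q
      have hfo := (isTorsion_of_finite (G := R q)) ⟨x, hq⟩
      obtain ⟨n, hn, hpow⟩ := isOfFinOrder_iff_pow_eq_one.mp hfo
      have : x ∈ CommGroup.torsion (center H) := by
        rw [CommGroup.mem_torsion, isOfFinOrder_iff_pow_eq_one]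
        exact ⟨n, hn, by simpa [Subtype.ext_iff] using hpow⟩
      exact this
    have hZle : Z ≤ CommGroup.torsion (center H) := (closure_le _).mpr hsub
    intro z
    have hz := hZle z.2
    rw [CommGroup.mem_torsion] at hz
    obtain ⟨n, hn, hpow⟩ := isOfFinOrder_iff_pow_eq_one.mp hz
    rw [isOfFinOrder_iff_pow_eq_one]
    exact ⟨n, hn, by apply Subtype.ext; simpa using hpow⟩
  haveI hZfin : Finite Z := CommGroup.finite_of_fg_torsion _ hZtor
  -- `⁅S, ⊤⁆` is contained in the image of `Z` in `H`
  have hle : (⁅S, (⊤ : Subgroup H)⁆ : Subgroup H) ≤ Z.map (center H).subtype := by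
    rw [commutator_le]
    intro s hs g _
    set q : S ⧸ (commutator H).subgroupOf S := QuotientGroup.mk (⟨s, hs⟩ : S) with hq
    set d : S := (q.out)⁻¹ * ⟨s, hs⟩ with hdd
    have hout : (QuotientGroup.mk q.out : S ⧸ (commutator H).subgroupOf S) = q :=
      Quotient.out_eq' q
    have hd : ((d : S) : H) ∈ commutator H := by
      have h2 : ((q.out)⁻¹ * ⟨s, hs⟩ : S) ∈ (commutator H).subgroupOf S := by
        apply QuotientGroup.eq.mp
        rw [hout, hq]
      rw [mem_subgroupOf] at h2
      exact h2
    have hseq : s = ((q.out : S) : H) * ((d : S) : H) := by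
      have h3 : (q.out : S) * d = ⟨s, hs⟩ := by rw [hdd, mul_inv_cancel_left]
      calc s = ((⟨s, hs⟩ : S) : H) := rfl
        _ = (((q.out : S) * d : S) : H) := by rw [h3]
        _ = ((q.out : S) : H) * ((d : S) : H) := rfl
    have hcomm1 : ⁅((d : S) : H), g⁆ = 1 :=
      commutatorElement_eq_one_iff_mul_comm.mpr (mem_center_iff.mp (hc hd) g).symm
    have hred : ⁅s, g⁆ = ⁅((q.out : S) : H), g⁆ := by
      rw [hseq, comm_mul_left (ccen _ g) _, hcomm1, one_mul]
    have hmemZ : (⟨⁅((q.out : S) : H), g⁆, ccen _ g⟩ : center H) ∈ Z := by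
      apply Subgroup.subset_closure
      apply Set.mem_iUnion.mpr
      refine ⟨q, ⟨Abelianization.of g, ?_⟩⟩
      rfl
    rw [hred]
    exact ⟨_, hmemZ, rfl⟩
  haveI : Finite (Z.map (center H).subtype) :=
    Finite.of_equiv _ (Z.equivMapOfInjective _ (subtype_injective _)).toEquiv
  have hfinset : ((Z.map (center H).subtype : Subgroup H) : Set H).Finite := Set.toFinite _
  exact (hfinset.subset hle).to_subtype

end Core

/-- Let `G` be a group whose abelianization `G/D` (with `D = ⁅G,G⁆`) is finitely
generated, and let `D̃` be the preimage in `G` of the torsion subgroup of `G/D`.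
Then `⁅D,G⁆` has finite index in `⁅D̃,G⁆`: the quotient `⁅D̃,G⁆/⁅D,G⁆` is finite. -/
theorem commutator_torsion_preimage_finite_index (G : Type*) [Group G]
    (hfg : Group.FG (Abelianization G)) :
    Finite ((⁅(CommGroup.torsion (Abelianization G)).comap Abelianization.of,
        (⊤ : Subgroup G)⁆ : Subgroup G) ⧸
      ((⁅commutator G, (⊤ : Subgroup G)⁆ : Subgroup G).subgroupOf
        ⁅(CommGroup.torsion (Abelianization G)).comap Abelianization.of,
          (⊤ : Subgroup G)⁆)) := by
  classical
  haveI := hfg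
  set N : Subgroup G := ⁅commutator G, (⊤ : Subgroup G)⁆ with hN
  haveI : N.Normal := Subgroup.commutator_normal _ _
  set T : Subgroup G := (CommGroup.torsion (Abelianization G)).comap Abelianization.of with hT
  -- the commutator subgroup of `G ⧸ N` is central
  have hmapcomm : ∀ x ∈ commutator G, (QuotientGroup.mk' N) x ∈ commutator (G ⧸ N) := by
    intro x hx
    have h1 : ((commutator G).map (QuotientGroup.mk' N)) ≤ commutator (G ⧸ N) := by
      rw [commutator_def, commutator_def, Subgroup.map_commutator]
      exact Subgroup.commutator_mono le_top le_top
    exact h1 (mem_map_of_mem _ hx)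
  have hc : commutator (G ⧸ N) ≤ center (G ⧸ N) := by
    rw [commutator_def, commutator_le]
    intro a _ b _
    obtain ⟨x, rfl⟩ := QuotientGroup.mk'_surjective N a
    obtain ⟨y, rfl⟩ := QuotientGroup.mk'_surjective N b
    rw [mem_center_iff]
    intro h
    obtain ⟨z, rfl⟩ := QuotientGroup.mk'_surjective N h
    rw [← map_commutatorElement, ← map_mul, ← map_mul]
    have hmem : (z * ⁅x, y⁆)⁻¹ * (⁅x, y⁆ * z) ∈ N := by
      have he : (z * ⁅x, y⁆)⁻¹ * (⁅x, y⁆ * z) = ⁅⁅x, y⁆⁻¹, z⁻¹⁆ := by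
        simp only [commutatorElement_def]; group
      rw [he, hN]
      exact commutator_mem_commutator
        ((commutator G).inv_mem (commutator_mem_commutator (mem_top x) (mem_top y)))
        (mem_top _)
    exact (QuotientGroup.eq (s := N)).mpr hmem
  -- the abelianization of `G ⧸ N` is finitely generated
  have hfg2 : Group.FG (Abelianization (G ⧸ N)) := by
    have hof' : Function.Surjective (Abelianization.of (G := G ⧸ N)) :=
      fun x => Quotient.inductionOn' x fun g => ⟨g, rfl⟩
    have hsurj : Function.Surjective (Abelianization.map (QuotientGroup.mk' N)) := by
      intro y
      obtain ⟨q, rfl⟩ := hof' y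
      obtain ⟨x, rfl⟩ := QuotientGroup.mk'_surjective N q
      exact ⟨Abelianization.of x, Abelianization.map_of _ _⟩
    exact Group.fg_of_surjective hsurj
  -- the image of `T` in `G ⧸ N`
  set S : Subgroup (G ⧸ N) := T.map (QuotientGroup.mk' N) with hS
  -- `T` modulo the commutator subgroup is finite (it is the torsion subgroup)
  have hfin1 : Finite (T ⧸ (commutator G).subgroupOf T) := by
    haveI : Finite (CommGroup.torsion (Abelianization G)) := finite_torsion_of_fg _
    refine Finite.of_injective (fun x : T ⧸ (commutator G).subgroupOf T =>
      Quotient.liftOn' x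
        (fun t => (⟨Abelianization.of (t : G), t.2⟩ : CommGroup.torsion (Abelianization G)))
        ?_) ?_
    · intro a b hab
      rw [QuotientGroup.leftRel_apply, mem_subgroupOf] at hab
      apply Subtype.ext
      show ((a : G) : G ⧸ commutator G) = ((b : G) : G ⧸ commutator G)
      exact (QuotientGroup.eq (s := commutator G)).mpr (by simpa using hab)
    · intro x y
      refine Quotient.inductionOn₂' x y fun a b h => ?_
      have h2 : ((a : G) : G ⧸ commutator G) = ((b : G) : G ⧸ commutator G) :=
        congrArg Subtype.val h
      have h3 : (a : G)⁻¹ * (b : G) ∈ commutator G := (QuotientGroup.eq (s := commutator G)).mp h2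
      apply Quotient.sound'
      rw [QuotientGroup.leftRel_apply, mem_subgroupOf]
      simpa using h3
  -- hence `S` modulo the commutator subgroup of `G ⧸ N` is finite
  have hfin2 : Finite (S ⧸ (commutator (G ⧸ N)).subgroupOf S) := by
    refine Finite.of_surjective (α := (T ⧸ (commutator G).subgroupOf T))
      (β := (S ⧸ (commutator (G ⧸ N)).subgroupOf S))
      (Quotient.map' (fun t : T => (⟨(QuotientGroup.mk' N) (t : G),
        mem_map_of_mem _ t.2⟩ : S)) ?_) ?_
    · intro a b hab
      rw [QuotientGroup.leftRel_apply, mem_subgroupOf] at hab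
      rw [QuotientGroup.leftRel_apply, mem_subgroupOf]
      show ((QuotientGroup.mk' N) (a : G))⁻¹ * (QuotientGroup.mk' N) (b : G) ∈
        commutator (G ⧸ N)
      rw [← map_inv, ← map_mul]
      exact hmapcomm _ (by simpa using hab)
    · intro y
      refine Quotient.inductionOn' y fun s => ?_
      obtain ⟨t, ht, hts⟩ := s.2
      refine ⟨Quotient.mk'' (⟨t, ht⟩ : T), ?_⟩
      simp only [Quotient.map'_mk'']
      exact congrArg Quotient.mk'' (Subtype.ext hts)
  -- the restriction of the quotient map to `⁅T, ⊤⁆`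
  set f : (⁅T, (⊤ : Subgroup G)⁆ : Subgroup G) →* G ⧸ N :=
    (QuotientGroup.mk' N).comp (⁅T, (⊤ : Subgroup G)⁆ : Subgroup G).subtype with hf
  have hker : f.ker = N.subgroupOf ⁅T, (⊤ : Subgroup G)⁆ := by
    ext x
    simp [hf, MonoidHom.mem_ker, QuotientGroup.eq_one_iff, mem_subgroupOf]
  have hrange : Finite f.range := by
    have h1 : f.range = ⁅S, (⊤ : Subgroup (G ⧸ N))⁆ := by
      rw [hf, MonoidHom.range_comp, Subgroup.range_subtype, hS, Subgroup.map_commutator,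
        Subgroup.map_top_of_surjective _ (QuotientGroup.mk'_surjective N)]
    rw [h1]
    exact core_finite hc hfg2 S hfin2
  rw [← hker]
  exact Finite.of_equiv _ (QuotientGroup.quotientKerEquivRange f).symm.toEquiv
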